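/- Let n₁, n₂ be positive integers and let f be a C² holomorphic function on 𝒰 = ℝ₊² × ℋ_{n₁} × ℋ_{n₂}, i.e. ∂f/∂w̄_α := (1/2)(∂f/∂s_α + i ∂f/∂t_α) = 0 and Z̄_{αj} f := ∂f/∂z̄_{αj} − i z_{αj} ∂f/∂s_α = 0 for all j = 1,…,n_α and α = 1,2. Then for every p > 0 and every (t₁,t₂,g₁,g₂) ∈ 𝒰 with f(t₁,t₂,g₁,g₂) ≠ 0, one has ℒ_α |f|^p(t₁,t₂,g₁,g₂) ≥ 0 for each α = 1,2, where ℒ_α = (1/(4 n_α)) ∑_{j=1}^{2 n_α} X_{αj}² − ∂/∂t_α is the heat operator acting in the variables (t_α, g_α). -/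

import Mathlib

noncomputable section

/-- A point of the Heisenberg group ℋ_n : `(s, z) ∈ ℝ × ℂⁿ`. -/
abbrev Heis (n : ℕ) := ℝ × (Fin n → ℂ)

/-- The flat-model ambient space `(t₁, t₂, g₁, g₂)`. -/
abbrev FlatPt (n₁ n₂ : ℕ) := ℝ × ℝ × Heis n₁ × Heis n₂

/-- The left-invariant vector field `X_j = ∂/∂x_j + 2 x_{n+j} ∂/∂s` (real-valued). -/
def XR {n : ℕ} (j : Fin n) (v : Heis n → ℝ) (g : Heis n) : ℝ :=
  fderiv ℝ v g (2 * (g.2 j).im, Pi.single j 1)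

/-- The left-invariant vector field `X_{n+j} = ∂/∂x_{n+j} − 2 x_j ∂/∂s` (real-valued). -/
def YR {n : ℕ} (j : Fin n) (v : Heis n → ℝ) (g : Heis n) : ℝ :=
  fderiv ℝ v g (-2 * (g.2 j).re, Pi.single j Complex.I)

/-- The heat operator `ℒ₁ = (1/(4n₁)) ∑_{j=1}^{2n₁} X_{1j}² − ∂/∂t₁` acting
in the variables `(t₁, g₁)` on real-valued functions on the flat model. -/
def heatOpR₁ (n₁ n₂ : ℕ) (v : FlatPt n₁ n₂ → ℝ) (p : FlatPt n₁ n₂) : ℝ :=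
  (1 / (4 * (n₁ : ℝ))) *
      ∑ j : Fin n₁, (XR j (XR j (fun g => v (p.1, p.2.1, g, p.2.2.2))) p.2.2.1
        + YR j (YR j (fun g => v (p.1, p.2.1, g, p.2.2.2))) p.2.2.1)
    - fderiv ℝ v p (1, 0, 0, 0)

/-- The heat operator `ℒ₂ = (1/(4n₂)) ∑_{j=1}^{2n₂} X_{2j}² − ∂/∂t₂` acting
in the variables `(t₂, g₂)`. -/
def heatOpR₂ (n₁ n₂ : ℕ) (v : FlatPt n₁ n₂ → ℝ) (p : FlatPt n₁ n₂) : ℝ :=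
  (1 / (4 * (n₂ : ℝ))) *
      ∑ j : Fin n₂, (XR j (XR j (fun g => v (p.1, p.2.1, p.2.2.1, g))) p.2.2.2
        + YR j (YR j (fun g => v (p.1, p.2.1, p.2.2.1, g))) p.2.2.2)
    - fderiv ℝ v p (0, 1, 0, 0)

/-- The holomorphy equations on the flat model. -/
def IsFlatHolomorphicAt (n₁ n₂ : ℕ) (f : FlatPt n₁ n₂ → ℂ) (p : FlatPt n₁ n₂) : Prop :=
  (1/2 : ℂ) * (fderiv ℝ f p (0, 0, (1, 0), 0) + Complex.I * fderiv ℝ f p (1, 0, 0, 0)) = 0 ∧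
  (1/2 : ℂ) * (fderiv ℝ f p (0, 0, 0, (1, 0)) + Complex.I * fderiv ℝ f p (0, 1, 0, 0)) = 0 ∧
  (∀ j : Fin n₁,
    (1/2 : ℂ) * (fderiv ℝ f p (0, 0, (0, Pi.single j 1), 0)
        + Complex.I * fderiv ℝ f p (0, 0, (0, Pi.single j Complex.I), 0))
      - Complex.I * p.2.2.1.2 j * fderiv ℝ f p (0, 0, (1, 0), 0) = 0) ∧
  (∀ j : Fin n₂,
    (1/2 : ℂ) * (fderiv ℝ f p (0, 0, 0, (0, Pi.single j 1))
        + Complex.I * fderiv ℝ f p (0, 0, 0, (0, Pi.single j Complex.I)))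
      - Complex.I * p.2.2.2.2 j * fderiv ℝ f p (0, 0, 0, (1, 0)) = 0)

open Complex
section AuxHeatPre
variable {E : Type*} [NormedAddCommGroup E] [NormedSpace ℝ E]

lemma xr_xr_eq {n : ℕ} (u : E → ℝ) (cc : E) (g₀ : Heis n) (ι : Heis n →L[ℝ] E)
    (hu : ContDiffAt ℝ 2 u (cc + ι g₀))
    (φ : Heis n →L[ℝ] ℝ) (w : Fin n → ℂ)
    (hφ : φ (φ g₀, w) = 0) :
    fderiv ℝ (fun g => fderiv ℝ (fun g' => u (cc + ι g')) g (φ g, w)) g₀ (φ g₀, w)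
      = fderiv ℝ (fderiv ℝ u) (cc + ι g₀) (ι (φ g₀, w)) (ι (φ g₀, w)) := by
  set x₀ := cc + ι g₀ with hx₀
  obtain ⟨s, hs_mem, hs⟩ : ∃ s ∈ nhds x₀, ContDiffOn ℝ 2 u s := hu.contDiffOn le_rfl (by simp)
  obtain ⟨O, hOs, hO_open, hxO⟩ := mem_nhds_iff.1 hs_mem
  have hdiff : ∀ y ∈ O, DifferentiableAt ℝ u y := fun y hy =>
    ((hs.mono hOs y hy).contDiffAt (hO_open.mem_nhds hy)).differentiableAt two_ne_zero
  have he : ∀ g : Heis n, HasFDerivAt (fun g' => cc + ι g') ι g := fun g =>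
    (ι.hasFDerivAt).const_add cc
  -- inner fderiv rewriting, eventually
  have hev : (fun g => fderiv ℝ (fun g' => u (cc + ι g')) g (φ g, w)) =ᶠ[nhds g₀]
      (fun g => fderiv ℝ u (cc + ι g) (ι (φ g, w))) := by
    have hcont : Continuous fun g : Heis n => cc + ι g := by continuity
    have : (fun g : Heis n => cc + ι g) ⁻¹' O ∈ nhds g₀ :=
      (hO_open.preimage hcont).mem_nhds (by simpa [← hx₀] using hxO)
    filter_upwards [this] with g hg
    have h1 : HasFDerivAt (fun g' => u (cc + ι g')) ((fderiv ℝ u (cc + ι g)).comp ι) g :=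
      ((hdiff _ hg).hasFDerivAt).comp g (he g)
    rw [h1.fderiv]; rfl
  rw [hev.fderiv_eq]
  have hfd : DifferentiableAt ℝ (fderiv ℝ u) x₀ :=
    (hu.fderiv_right (le_refl 2)).differentiableAt one_ne_zero
  have hc : HasFDerivAt (fun g : Heis n => fderiv ℝ u (cc + ι g))
      ((fderiv ℝ (fderiv ℝ u) x₀).comp ι) g₀ := hfd.hasFDerivAt.comp g₀ (he g₀)
  have hvv : HasFDerivAt (fun g : Heis n => ι (φ g, w))
      (ι.comp (φ.prod (0 : Heis n →L[ℝ] (Fin n → ℂ)))) g₀ := by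
    have : HasFDerivAt (fun g : Heis n => ((φ g, w) : Heis n))
        (φ.prod (0 : Heis n →L[ℝ] (Fin n → ℂ))) g₀ :=
      HasFDerivAt.prodMk (φ.hasFDerivAt) (hasFDerivAt_const _ _)
    exact (ι.hasFDerivAt).comp g₀ this
  have := (hc.clm_apply hvv).fderiv
  rw [this]
  simp [hφ, hx₀, Prod.mk_zero_zero]

variable {E : Type*} [NormedAddCommGroup E] [NormedSpace ℝ E]

/-- conj ∘ f has derivative conj ∘ f' -/
lemma hasFDerivAt_conj {f : E → ℂ} {f' : E →L[ℝ] ℂ} {y : E} (hf : HasFDerivAt f f' y) :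
    HasFDerivAt (fun x => (starRingEnd ℂ) (f x))
      ((Complex.conjCLE.toContinuousLinearMap).comp f') y :=
  Complex.conjCLE.toContinuousLinearMap.hasFDerivAt.comp y hf

/-- first derivative of normSq ∘ f -/
lemma hasFDerivAt_normSq_comp {f : E → ℂ} {f' : E →L[ℝ] ℂ} {y : E} (hf : HasFDerivAt f f' y) :
    HasFDerivAt (fun x => Complex.normSq (f x))
      (Complex.reCLM.comp
        (f y • ((Complex.conjCLE.toContinuousLinearMap).comp f') + (starRingEnd ℂ) (f y) • f')) y := by
  have hmul : HasFDerivAt (fun x => f x * (starRingEnd ℂ) (f x))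
      (f y • ((Complex.conjCLE.toContinuousLinearMap).comp f') + (starRingEnd ℂ) (f y) • f') y :=
    hf.mul (hasFDerivAt_conj hf)
  have := Complex.reCLM.hasFDerivAt.comp y hmul
  refine this.congr_of_eventuallyEq (Filter.Eventually.of_forall fun x => ?_)
  simp [Complex.mul_conj]

/-- first derivative of (normSq ∘ f)^k -/
lemma hasFDerivAt_u {f : E → ℂ} {y : E} (hfd : DifferentiableAt ℝ f y) (hfy : f y ≠ 0) (k : ℝ) :
    HasFDerivAt (fun x => Complex.normSq (f x) ^ k)
      ((k * Complex.normSq (f y) ^ (k - 1)) •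
        (Complex.reCLM.comp
          (f y • ((Complex.conjCLE.toContinuousLinearMap).comp (fderiv ℝ f y))
            + (starRingEnd ℂ) (f y) • fderiv ℝ f y))) y := by
  have h1 := hasFDerivAt_normSq_comp hfd.hasFDerivAt
  exact h1.rpow_const (Or.inl (by simpa using hfy))

lemma contDiffAt_u {f : E → ℂ} {x₀ : E} (hf : ContDiffAt ℝ 2 f x₀) (hf0 : f x₀ ≠ 0) (k : ℝ) :
    ContDiffAt ℝ 2 (fun x => Complex.normSq (f x) ^ k) x₀ := by
  have hns : ContDiff ℝ 2 (fun z : ℂ => Complex.normSq z) := by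
    have : (fun z : ℂ => Complex.normSq z) = fun z : ℂ => z.re * z.re + z.im * z.im := by
      funext z; exact Complex.normSq_apply z
    rw [this]
    exact ((Complex.reCLM.contDiff.mul Complex.reCLM.contDiff).add
      (Complex.imCLM.contDiff.mul Complex.imCLM.contDiff))
  have hc2 : ContDiffAt ℝ 2 (fun x => Complex.normSq (f x)) x₀ := (hns.contDiffAt).comp x₀ hf
  exact hc2.rpow_const_of_ne (by simpa using hf0)

lemma snd_fderiv_apply {F : Type*} [NormedAddCommGroup F] [NormedSpace ℝ F]
    (u : E → F) {x₀ : E} (hu : DifferentiableAt ℝ (fderiv ℝ u) x₀) (v b : E) :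
    fderiv ℝ (fun y => fderiv ℝ u y b) x₀ v = fderiv ℝ (fderiv ℝ u) x₀ v b := by
  have := fderiv_clm_apply (c := fderiv ℝ u) (u := fun _ => b) hu (differentiableAt_const b)
  rw [show (fun y => fderiv ℝ u y b) = fun y => (fderiv ℝ u y) ((fun _ : E => b) y) from rfl, this]
  simp

lemma hess_u_apply {f : E → ℂ} {x₀ : E} (hf : ContDiffAt ℝ 2 f x₀) (hf0 : f x₀ ≠ 0) (k : ℝ)
    (v b : E) :
    fderiv ℝ (fderiv ℝ (fun x => Complex.normSq (f x) ^ k)) x₀ v b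
    = (k * ((k-1) * Complex.normSq (f x₀) ^ (k-2) *
        (2 * ((starRingEnd ℂ) (f x₀) * fderiv ℝ f x₀ v).re)))
        * (2 * ((starRingEnd ℂ) (f x₀) * fderiv ℝ f x₀ b).re)
      + (k * Complex.normSq (f x₀) ^ (k-1)) *
        (2 * ((starRingEnd ℂ) (fderiv ℝ f x₀ v) * fderiv ℝ f x₀ b).re
          + 2 * ((starRingEnd ℂ) (f x₀) * (fderiv ℝ (fderiv ℝ f) x₀ v b)).re) := by
  have hu2 := contDiffAt_u hf hf0 k
  have hufd : DifferentiableAt ℝ (fderiv ℝ (fun x => Complex.normSq (f x) ^ k)) x₀ :=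
    (hu2.fderiv_right (le_refl 2)).differentiableAt one_ne_zero
  rw [← snd_fderiv_apply _ hufd v b]
  -- neighborhood where f is C¹-differentiable and nonzero
  obtain ⟨s, hs_mem, hs⟩ : ∃ s ∈ nhds x₀, ContDiffOn ℝ 2 f s := hf.contDiffOn le_rfl (by simp)
  obtain ⟨O, hOs, hO_open, hxO⟩ := mem_nhds_iff.1 hs_mem
  have hfd : ∀ y ∈ O, DifferentiableAt ℝ f y := fun y hy =>
    ((hs.mono hOs y hy).contDiffAt (hO_open.mem_nhds hy)).differentiableAt two_ne_zero
  have hfc : ContinuousAt f x₀ := hf.continuousAt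
  have hne : ∀ᶠ y in nhds x₀, f y ≠ 0 := hfc.eventually_ne hf0
  have hOn : ∀ᶠ y in nhds x₀, y ∈ O := hO_open.mem_nhds hxO
  have hev : (fun y => fderiv ℝ (fun x => Complex.normSq (f x) ^ k) y b) =ᶠ[nhds x₀]
      (fun y => (k * Complex.normSq (f y) ^ (k - 1)) *
        (f y * (starRingEnd ℂ) (fderiv ℝ f y b) + (starRingEnd ℂ) (f y) * (fderiv ℝ f y b)).re) := by
    filter_upwards [hne, hOn] with y hy1 hy2
    rw [(hasFDerivAt_u (hfd y hy2) hy1 k).fderiv]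
    simp [smul_eq_mul]; ring
  rw [hev.fderiv_eq]
  -- now differentiate the explicit formula
  have hF2 : HasFDerivAt (fderiv ℝ f) (fderiv ℝ (fderiv ℝ f) x₀) x₀ :=
    ((hf.fderiv_right (le_refl 2)).differentiableAt one_ne_zero).hasFDerivAt
  have hFb : HasFDerivAt (fun y => fderiv ℝ f y b)
      ((fderiv ℝ f x₀).comp (0 : E →L[ℝ] E) + (fderiv ℝ (fderiv ℝ f) x₀).flip b) x₀ :=
    hF2.clm_apply (hasFDerivAt_const b x₀)
  have hF : HasFDerivAt f (fderiv ℝ f x₀) x₀ := (hfd x₀ hxO).hasFDerivAt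
  have hr : HasFDerivAt (fun y => Complex.normSq (f y) ^ (k-1))
      (((k-1) * Complex.normSq (f x₀) ^ (k - 1 - 1)) •
        (Complex.reCLM.comp
          (f x₀ • ((Complex.conjCLE.toContinuousLinearMap).comp (fderiv ℝ f x₀))
            + (starRingEnd ℂ) (f x₀) • fderiv ℝ f x₀))) x₀ :=
    hasFDerivAt_u (hfd x₀ hxO) hf0 (k-1)
  have hP1 : HasFDerivAt (fun y => f y * (starRingEnd ℂ) (fderiv ℝ f y b)) _ x₀ :=
    hF.mul (hasFDerivAt_conj hFb)
  have hP2 : HasFDerivAt (fun y => (starRingEnd ℂ) (f y) * (fderiv ℝ f y b)) _ x₀ :=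
    (hasFDerivAt_conj hF).mul hFb
  have hm : HasFDerivAt (fun y =>
      (f y * (starRingEnd ℂ) (fderiv ℝ f y b) + (starRingEnd ℂ) (f y) * (fderiv ℝ f y b)).re) _ x₀ :=
    Complex.reCLM.hasFDerivAt.comp x₀ (hP1.add hP2)
  have hG : HasFDerivAt (fun y => k * Complex.normSq (f y) ^ (k - 1) *
      (f y * (starRingEnd ℂ) (fderiv ℝ f y b) + (starRingEnd ℂ) (f y) * (fderiv ℝ f y b)).re) _ x₀ :=
    (hr.const_mul k).mul hm
  rw [hG.fderiv]
  simp [smul_eq_mul, Complex.add_re, Complex.mul_re, Complex.conj_re, Complex.conj_im, Complex.normSq_apply]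
  ring_nf

lemma grad_u_apply {f : E → ℂ} {x₀ : E} (hfd : DifferentiableAt ℝ f x₀) (hf0 : f x₀ ≠ 0)
    (k : ℝ) (b : E) :
    fderiv ℝ (fun x => Complex.normSq (f x) ^ k) x₀ b
      = (k * Complex.normSq (f x₀) ^ (k-1)) *
        (2 * ((starRingEnd ℂ) (f x₀) * fderiv ℝ f x₀ b).re) := by
  rw [(hasFDerivAt_u hfd hf0 k).fderiv]
  simp [smul_eq_mul, Complex.mul_re, Complex.conj_re, Complex.conj_im]
  ring

lemma slot_core (f : E → ℂ) (U : Set E) (hU : IsOpen U) (q : E) (hq : q ∈ U)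
    (hf : ContDiffOn ℝ 2 f U) (hf0 : f q ≠ 0) (k : ℝ) (hk : 0 < k)
    (n : ℕ) (hn : 0 < n) (Es Et : E) (Ex Ey : Fin n → E)
    (coords : Fin n → E →L[ℝ] ℂ)
    (hcs : ∀ j, coords j Es = 0) (hcx : ∀ j, coords j (Ex j) = 1)
    (hcy : ∀ j, coords j (Ey j) = Complex.I)
    (hholo1 : ∀ x ∈ U, fderiv ℝ f x Es + Complex.I * fderiv ℝ f x Et = 0)
    (hholoZ : ∀ x ∈ U, ∀ j, fderiv ℝ f x (Ex j) + Complex.I * fderiv ℝ f x (Ey j)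
        - 2 * Complex.I * (coords j x) * fderiv ℝ f x Es = 0) :
    0 ≤ (1/(4*(n:ℝ))) * ∑ j : Fin n,
        (fderiv ℝ (fderiv ℝ (fun x => Complex.normSq (f x) ^ k)) q
            ((2*((coords j q).im)) • Es + Ex j) ((2*((coords j q).im)) • Es + Ex j)
          + fderiv ℝ (fderiv ℝ (fun x => Complex.normSq (f x) ^ k)) q
            ((-2*((coords j q).re)) • Es + Ey j) ((-2*((coords j q).re)) • Es + Ey j))
      - fderiv ℝ (fun x => Complex.normSq (f x) ^ k) q Et := by
  have hfq : ContDiffAt ℝ 2 f q := hf.contDiffAt (hU.mem_nhds hq)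
  have hdiffq : DifferentiableAt ℝ f q := hfq.differentiableAt two_ne_zero
  have hc₀ : 0 < Complex.normSq (f q) := Complex.normSq_pos.mpr hf0
  have hsym : ∀ v w : E, fderiv ℝ (fderiv ℝ f) q v w = fderiv ℝ (fderiv ℝ f) q w v :=
    fun v w => hfq.isSymmSndFDerivAt (by simp [minSmoothness_of_isRCLikeNormedField]) v w
  have hF2 : HasFDerivAt (fderiv ℝ f) (fderiv ℝ (fderiv ℝ f) q) q :=
    ((hfq.fderiv_right (le_refl 2)).differentiableAt one_ne_zero).hasFDerivAt
  have hAB : fderiv ℝ f q Et = Complex.I * fderiv ℝ f q Es := by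
    have h := hholo1 q hq
    linear_combination (-Complex.I) * h + (fderiv ℝ f q Et) * Complex.I_sq
  -- second-order consequence of the CR equations
  have hG : ∀ j, ∀ d : E, fderiv ℝ (fderiv ℝ f) q d (Ex j)
      + Complex.I * fderiv ℝ (fderiv ℝ f) q d (Ey j)
      - 2*Complex.I*(coords j d)*(fderiv ℝ f q Es)
      - 2*Complex.I*(coords j q)*(fderiv ℝ (fderiv ℝ f) q d Es) = 0 := by
    intro j d
    have h1 : HasFDerivAt (fun x => fderiv ℝ f x (Ex j))
        ((fderiv ℝ f q).comp (0 : E →L[ℝ] E) + (fderiv ℝ (fderiv ℝ f) q).flip (Ex j)) q :=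
      hF2.clm_apply (hasFDerivAt_const _ _)
    have h2 : HasFDerivAt (fun x => fderiv ℝ f x (Ey j))
        ((fderiv ℝ f q).comp (0 : E →L[ℝ] E) + (fderiv ℝ (fderiv ℝ f) q).flip (Ey j)) q :=
      hF2.clm_apply (hasFDerivAt_const _ _)
    have h3 : HasFDerivAt (fun x => fderiv ℝ f x Es)
        ((fderiv ℝ f q).comp (0 : E →L[ℝ] E) + (fderiv ℝ (fderiv ℝ f) q).flip Es) q :=
      hF2.clm_apply (hasFDerivAt_const _ _)
    have hco : HasFDerivAt (fun x => (2*Complex.I) * (coords j x))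
        ((2*Complex.I) • (coords j : E →L[ℝ] ℂ)) q := ((coords j).hasFDerivAt).const_mul _
    have h4 := hco.mul h3
    have hGf := (h1.add (h2.const_mul Complex.I)).sub h4
    have hev : (fun x => fderiv ℝ f x (Ex j) + Complex.I * fderiv ℝ f x (Ey j)
        - 2*Complex.I*(coords j x)*fderiv ℝ f x Es) =ᶠ[nhds q] (fun _ => (0:ℂ)) := by
      filter_upwards [hU.mem_nhds hq] with x hx
      exact hholoZ x hx j
    have h0 : fderiv ℝ (fun x => fderiv ℝ f x (Ex j) + Complex.I * fderiv ℝ f x (Ey j)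
        - 2*Complex.I*(coords j x)*fderiv ℝ f x Es) q = 0 := by
      rw [hev.fderiv_eq]; exact fderiv_const_apply 0
    have hD0 := hGf.fderiv.symm.trans h0
    have h6 := congrArg (fun L : E →L[ℝ] ℂ => L d) hD0
    simp only [ContinuousLinearMap.add_apply, ContinuousLinearMap.sub_apply,
      ContinuousLinearMap.smul_apply, ContinuousLinearMap.comp_apply,
      ContinuousLinearMap.zero_apply, map_zero, ContinuousLinearMap.flip_apply,
      smul_eq_mul, zero_add] at h6
    linear_combination h6
  have hcoV : ∀ j, coords j ((2*((coords j q).im)) • Es + Ex j) = 1 := by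
    intro j; rw [map_add, map_smul, hcs, hcx]; simp
  have hcoW : ∀ j, coords j ((-2*((coords j q).re)) • Es + Ey j) = Complex.I := by
    intro j; rw [map_add, map_smul, hcs, hcy]; simp
  -- sum of pure second derivatives
  have hsum : ∀ j, fderiv ℝ (fderiv ℝ f) q ((2*((coords j q).im)) • Es + Ex j)
        ((2*((coords j q).im)) • Es + Ex j)
      + fderiv ℝ (fderiv ℝ f) q ((-2*((coords j q).re)) • Es + Ey j)
        ((-2*((coords j q).re)) • Es + Ey j)
      = 4 * Complex.I * fderiv ℝ f q Es := by
    intro j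
    have e1 := hG j ((2*((coords j q).im)) • Es + Ex j)
    have e2 := hG j ((-2*((coords j q).re)) • Es + Ey j)
    rw [hcoV j] at e1
    rw [hcoW j] at e2
    have hz := Complex.re_add_im (coords j q)
    have hs1 := hsym (Ex j) Es
    have hs2 := hsym (Ey j) Es
    have hs3 := hsym (Ey j) (Ex j)
    simp only [map_add, map_smul, ContinuousLinearMap.add_apply,
      ContinuousLinearMap.smul_apply, Complex.real_smul, Complex.ofReal_mul,
      Complex.ofReal_neg, Complex.ofReal_ofNat] at e1 e2 ⊢
    rw [hs1, hs2, hs3] at *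
    linear_combination e1 - Complex.I * e2
      + (-2 * (fderiv ℝ (fderiv ℝ f) q Es (Ey j))
         - 2*Complex.I*(fderiv ℝ (fderiv ℝ f) q Es (Ex j))
         + 4*((coords j q).re : ℂ)*(fderiv ℝ (fderiv ℝ f) q Es Es)
         - 4*Complex.I*((coords j q).im : ℂ)*(fderiv ℝ (fderiv ℝ f) q Es Es)) * hz
      + (2*((coords j q).im : ℂ)*(fderiv ℝ (fderiv ℝ f) q Es (Ex j))
         + 4*((coords j q).im : ℂ)^2*(fderiv ℝ (fderiv ℝ f) q Es Es)
         + 4*((coords j q).re : ℂ)*(coords j q)*(fderiv ℝ (fderiv ℝ f) q Es Es)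
         - 2*((coords j q).re : ℂ)*(fderiv ℝ (fderiv ℝ f) q Es (Ey j))
         - 2*(coords j q)*(fderiv ℝ (fderiv ℝ f) q Es (Ey j))
         + (fderiv ℝ (fderiv ℝ f) q (Ey j) (Ey j))
         - 2*Complex.I*(fderiv ℝ f q Es)) * Complex.I_sq
  -- first derivatives along the pair of directions
  have haW : ∀ j, fderiv ℝ f q ((-2*((coords j q).re)) • Es + Ey j)
      = Complex.I * fderiv ℝ f q ((2*((coords j q).im)) • Es + Ex j) := by
    intro j
    have hZ := hholoZ q hq j
    have hz := Complex.re_add_im (coords j q)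
    simp only [map_add, map_smul, Complex.real_smul, Complex.ofReal_mul,
      Complex.ofReal_neg, Complex.ofReal_ofNat]
    linear_combination (-Complex.I) * hZ + (-2 * (fderiv ℝ f q Es)) * hz
      + (-(2*(fderiv ℝ f q Es)*(coords j q)) + fderiv ℝ f q (Ey j)) * Complex.I_sq
  -- key per-index formula
  have hkey : ∀ j : Fin n,
      fderiv ℝ (fderiv ℝ (fun x => Complex.normSq (f x) ^ k)) q
          ((2*((coords j q).im)) • Es + Ex j) ((2*((coords j q).im)) • Es + Ex j)
        + fderiv ℝ (fderiv ℝ (fun x => Complex.normSq (f x) ^ k)) q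
          ((-2*((coords j q).re)) • Es + Ey j) ((-2*((coords j q).re)) • Es + Ey j)
      = 4*k^2*(Complex.normSq (f q))^(k-1) *
          Complex.normSq (fderiv ℝ f q ((2*((coords j q).im)) • Es + Ex j))
        + 8*k*(Complex.normSq (f q))^(k-1) *
          ((starRingEnd ℂ) (f q) * (Complex.I * fderiv ℝ f q Es)).re := by
    intro j
    rw [hess_u_apply hfq hf0 k _ _, hess_u_apply hfq hf0 k _ _, haW j]
    have hs := hsum j
    have hsre := congrArg Complex.re hs
    have hsim := congrArg Complex.im hs
    have hc1 : (Complex.normSq (f q))^(k-2) * (Complex.normSq (f q))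
        = (Complex.normSq (f q))^(k-1) := by
      rw [← Real.rpow_add_one hc₀.ne']; congr 1; ring
    set av := fderiv ℝ f q ((2*((coords j q).im)) • Es + Ex j) with hav
    set HV := fderiv ℝ (fderiv ℝ f) q ((2*((coords j q).im)) • Es + Ex j)
        ((2*((coords j q).im)) • Es + Ex j) with hHV
    set HW := fderiv ℝ (fderiv ℝ f) q ((-2*((coords j q).re)) • Es + Ey j)
        ((-2*((coords j q).re)) • Es + Ey j) with hHW
    have hnF : Complex.normSq (f q) = (f q).re*(f q).re + (f q).im*(f q).im :=
      Complex.normSq_apply _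
    have hnav : Complex.normSq av = av.re*av.re + av.im*av.im := Complex.normSq_apply _
    simp only [Complex.mul_re, Complex.mul_im, Complex.add_re, Complex.add_im,
      Complex.conj_re, Complex.conj_im, Complex.I_re, Complex.I_im,
      Complex.re_ofNat, Complex.im_ofNat] at hsre hsim ⊢
    linear_combination (4*k*(k-1)*(av.re^2+av.im^2)) * hc1
      + (-(4*k*(k-1)*(av.re^2+av.im^2)*(Complex.normSq (f q))^(k-2))) * hnF
      + (-(4*k^2*(Complex.normSq (f q))^(k-1))) * hnav
      + (2*k*(Complex.normSq (f q))^(k-1)) * ((f q).re * hsre + (f q).im * hsim)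
  rw [Finset.sum_congr rfl (fun j _ => hkey j)]
  rw [grad_u_apply hdiffq hf0 k Et, hAB]
  rw [Finset.sum_add_distrib, Finset.sum_const, Finset.card_univ, Fintype.card_fin]
  rw [← Finset.mul_sum]
  have hns : 0 ≤ ∑ j : Fin n, Complex.normSq (fderiv ℝ f q ((2*((coords j q).im)) • Es + Ex j)) :=
    Finset.sum_nonneg fun j _ => Complex.normSq_nonneg _
  have hrp : (0:ℝ) ≤ (Complex.normSq (f q))^(k-1) := Real.rpow_nonneg hc₀.le _
  have hn' : (0:ℝ) < n := by exact_mod_cast hn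
  have heq : (1/(4*(n:ℝ))) * (4*k^2*(Complex.normSq (f q))^(k-1) *
        (∑ j : Fin n, Complex.normSq (fderiv ℝ f q ((2*((coords j q).im)) • Es + Ex j)))
      + n • (8*k*(Complex.normSq (f q))^(k-1) *
          ((starRingEnd ℂ) (f q) * (Complex.I * fderiv ℝ f q Es)).re))
      - (k * (Complex.normSq (f q))^(k-1)) *
          (2 * ((starRingEnd ℂ) (f q) * (Complex.I * fderiv ℝ f q Es)).re)
      = (k^2*(Complex.normSq (f q))^(k-1)/n) *
        (∑ j : Fin n, Complex.normSq (fderiv ℝ f q ((2*((coords j q).im)) • Es + Ex j))) := by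
    rw [nsmul_eq_mul]; field_simp; ring
  rw [heq]
  have : (0:ℝ) ≤ k^2*(Complex.normSq (f q))^(k-1)/n := by positivity
  exact mul_nonneg this hns

lemma xr_xr_eq' {n : ℕ} (u : E → ℝ) (cc : E) (g₀ : Heis n) (ι : Heis n →L[ℝ] E)
    (e : Heis n → E) (hee : ∀ g, e g = cc + ι g)
    (hu : ContDiffAt ℝ 2 u (e g₀))
    (φ : Heis n →L[ℝ] ℝ) (w : Fin n → ℂ) (Φ : Heis n → ℝ) (hΦ : ∀ g, Φ g = φ g)
    (hφ : φ (φ g₀, w) = 0) :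
    fderiv ℝ (fun g => fderiv ℝ (fun g' => u (e g')) g (Φ g, w)) g₀ (Φ g₀, w)
      = fderiv ℝ (fderiv ℝ u) (e g₀) (ι (φ g₀, w)) (ι (φ g₀, w)) := by
  have h1 : (fun g' => u (e g')) = fun g' => u (cc + ι g') := by funext g; rw [hee]
  have h2 : (fun g => fderiv ℝ (fun g' => u (e g')) g (Φ g, w))
      = fun g => fderiv ℝ (fun g' => u (cc + ι g')) g (φ g, w) := by
    funext g; rw [h1, hΦ]
  rw [h2, hΦ, hee g₀]
  exact xr_xr_eq u cc g₀ ι (by rwa [hee g₀] at hu) φ w hφ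

end AuxHeatPre

section Slots

variable {n₁ n₂ : ℕ}

/-- Embedding of the first Heisenberg slot. -/
def iota1 (n₁ n₂ : ℕ) : Heis n₁ →L[ℝ] FlatPt n₁ n₂ :=
  (0 : Heis n₁ →L[ℝ] ℝ).prod ((0 : Heis n₁ →L[ℝ] ℝ).prod
    ((ContinuousLinearMap.id ℝ (Heis n₁)).prod (0 : Heis n₁ →L[ℝ] Heis n₂)))

/-- Embedding of the second Heisenberg slot. -/
def iota2 (n₁ n₂ : ℕ) : Heis n₂ →L[ℝ] FlatPt n₁ n₂ :=
  (0 : Heis n₂ →L[ℝ] ℝ).prod ((0 : Heis n₂ →L[ℝ] ℝ).prod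
    ((0 : Heis n₂ →L[ℝ] Heis n₁).prod (ContinuousLinearMap.id ℝ (Heis n₂))))

@[simp] lemma iota1_apply (g : Heis n₁) :
    iota1 n₁ n₂ g = ((0:ℝ), (0:ℝ), g, (0:Heis n₂)) := rfl

@[simp] lemma iota2_apply (g : Heis n₂) :
    iota2 n₁ n₂ g = ((0:ℝ), (0:ℝ), (0:Heis n₁), g) := rfl

/-- Coordinate functionals. -/
def coords1 (n₁ n₂ : ℕ) (j : Fin n₁) : FlatPt n₁ n₂ →L[ℝ] ℂ :=
  (ContinuousLinearMap.proj j).comp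
    ((ContinuousLinearMap.snd ℝ ℝ (Fin n₁ → ℂ)).comp
      ((ContinuousLinearMap.fst ℝ (Heis n₁) (Heis n₂)).comp
        ((ContinuousLinearMap.snd ℝ ℝ (Heis n₁ × Heis n₂)).comp
          (ContinuousLinearMap.snd ℝ ℝ (ℝ × (Heis n₁ × Heis n₂))))))

def coords2 (n₁ n₂ : ℕ) (j : Fin n₂) : FlatPt n₁ n₂ →L[ℝ] ℂ :=
  (ContinuousLinearMap.proj j).comp
    ((ContinuousLinearMap.snd ℝ ℝ (Fin n₂ → ℂ)).comp
      ((ContinuousLinearMap.snd ℝ (Heis n₁) (Heis n₂)).comp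
        ((ContinuousLinearMap.snd ℝ ℝ (Heis n₁ × Heis n₂)).comp
          (ContinuousLinearMap.snd ℝ ℝ (ℝ × (Heis n₁ × Heis n₂))))))

@[simp] lemma coords1_apply (j : Fin n₁) (x : FlatPt n₁ n₂) :
    coords1 n₁ n₂ j x = x.2.2.1.2 j := rfl

@[simp] lemma coords2_apply (j : Fin n₂) (x : FlatPt n₁ n₂) :
    coords2 n₁ n₂ j x = x.2.2.2.2 j := rfl

/-- The scalar part of the vector field `X_j`, as a continuous linear map. -/
def phiX {n : ℕ} (j : Fin n) : Heis n →L[ℝ] ℝ :=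
  (2:ℝ) • (Complex.imCLM.comp ((ContinuousLinearMap.proj j).comp
    (ContinuousLinearMap.snd ℝ ℝ (Fin n → ℂ))))

def phiY {n : ℕ} (j : Fin n) : Heis n →L[ℝ] ℝ :=
  (-2:ℝ) • (Complex.reCLM.comp ((ContinuousLinearMap.proj j).comp
    (ContinuousLinearMap.snd ℝ ℝ (Fin n → ℂ))))

@[simp] lemma phiX_apply {n : ℕ} (j : Fin n) (g : Heis n) :
    phiX j g = 2 * (g.2 j).im := rfl

@[simp] lemma phiY_apply {n : ℕ} (j : Fin n) (g : Heis n) :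
    phiY j g = -2 * (g.2 j).re := rfl

end Slots

/-- Parabolic subharmonicity on the product flat model: if `f` is C² and
holomorphic on `𝒰 = ℝ₊² × ℋ_{n₁} × ℋ_{n₂}`, then `ℒ_α |f|^p ≥ 0` at every
point where `f ≠ 0`, for every `p > 0` and `α = 1, 2`. -/
theorem heatOp_abs_rpow_nonneg_biparameter (n₁ n₂ : ℕ) (hn₁ : 0 < n₁) (hn₂ : 0 < n₂)
    (f : FlatPt n₁ n₂ → ℂ)
    (hf : ContDiffOn ℝ 2 f {q : FlatPt n₁ n₂ | 0 < q.1 ∧ 0 < q.2.1})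
    (hholo : ∀ q : FlatPt n₁ n₂, 0 < q.1 → 0 < q.2.1 → IsFlatHolomorphicAt n₁ n₂ f q)
    (p : ℝ) (hp : 0 < p) :
    ∀ q : FlatPt n₁ n₂, 0 < q.1 → 0 < q.2.1 → f q ≠ 0 →
      0 ≤ heatOpR₁ n₁ n₂ (fun x => ‖f x‖ ^ p) q ∧
      0 ≤ heatOpR₂ n₁ n₂ (fun x => ‖f x‖ ^ p) q := by
  intro q hq1 hq2 hfq0
  have hU : IsOpen {x : FlatPt n₁ n₂ | 0 < x.1 ∧ 0 < x.2.1} :=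
    (isOpen_lt continuous_const continuous_fst).inter
      (isOpen_lt continuous_const (continuous_fst.comp continuous_snd))
  have hqU : q ∈ {x : FlatPt n₁ n₂ | 0 < x.1 ∧ 0 < x.2.1} := ⟨hq1, hq2⟩
  set k := p/2 with hkdef
  have hk : 0 < k := by positivity
  have hrw : (fun x : FlatPt n₁ n₂ => ‖f x‖ ^ p) = fun x => Complex.normSq (f x) ^ k := by
    funext x
    rw [Complex.normSq_eq_norm_sq, ← Real.rpow_natCast ‖f x‖ 2,
      ← Real.rpow_mul (norm_nonneg _)]
    rw [hkdef]
    congr 1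
    push_cast
    ring
  rw [hrw]
  have hfq : ContDiffAt ℝ 2 f q := hf.contDiffAt (hU.mem_nhds hqU)
  have hu2 : ContDiffAt ℝ 2 (fun x => Complex.normSq (f x) ^ k) q := contDiffAt_u hfq hfq0 k
  constructor
  · -- slot 1
    have hcore := slot_core f _ hU q hqU hf hfq0 k hk n₁ hn₁
        ((0:ℝ), (0:ℝ), ((1:ℝ), (0:Fin n₁ → ℂ)), (0:Heis n₂))
        ((1:ℝ), (0:ℝ), (0:Heis n₁), (0:Heis n₂))
        (fun j => ((0:ℝ), (0:ℝ), ((0:ℝ), Pi.single j (1:ℂ)), (0:Heis n₂)))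
        (fun j => ((0:ℝ), (0:ℝ), ((0:ℝ), Pi.single j Complex.I), (0:Heis n₂)))
        (coords1 n₁ n₂)
        (fun j => by simp)
        (fun j => by simp)
        (fun j => by simp)
        (fun x hx => by
          have h := (hholo x hx.1 hx.2).1
          linear_combination 2*h)
        (fun x hx j => by
          have h := (hholo x hx.1 hx.2).2.2.1 j
          simp only [coords1_apply]
          linear_combination 2*h)
    have htermX : ∀ j : Fin n₁,
        XR j (XR j (fun g => Complex.normSq (f (q.1, q.2.1, g, q.2.2.2)) ^ k)) q.2.2.1
          = fderiv ℝ (fderiv ℝ (fun x => Complex.normSq (f x) ^ k)) q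
              ((2*((coords1 n₁ n₂ j q).im)) • ((0:ℝ), (0:ℝ), ((1:ℝ), (0:Fin n₁ → ℂ)), (0:Heis n₂))
                + ((0:ℝ), (0:ℝ), ((0:ℝ), Pi.single j (1:ℂ)), (0:Heis n₂)))
              ((2*((coords1 n₁ n₂ j q).im)) • ((0:ℝ), (0:ℝ), ((1:ℝ), (0:Fin n₁ → ℂ)), (0:Heis n₂))
                + ((0:ℝ), (0:ℝ), ((0:ℝ), Pi.single j (1:ℂ)), (0:Heis n₂))) := by
      intro j
      have h := xr_xr_eq' (fun x => Complex.normSq (f x) ^ k)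
          (q.1, q.2.1, (0:Heis n₁), q.2.2.2) q.2.2.1 (iota1 n₁ n₂)
          (fun g => (q.1, q.2.1, g, q.2.2.2))
          (fun g => by simp [Prod.ext_iff]) hu2
          (phiX j) (Pi.single j (1:ℂ)) (fun g => 2*(g.2 j).im) (fun g => rfl) (by simp)
      have hv : ((2*((coords1 n₁ n₂ j q).im)) • ((0:ℝ), (0:ℝ), ((1:ℝ), (0:Fin n₁ → ℂ)), (0:Heis n₂))
            + ((0:ℝ), (0:ℝ), ((0:ℝ), Pi.single j (1:ℂ)), (0:Heis n₂)))
          = iota1 n₁ n₂ ((phiX j) q.2.2.1, Pi.single j (1:ℂ)) := by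
        simp [Prod.ext_iff]
      rw [hv]
      exact h
    have htermY : ∀ j : Fin n₁,
        YR j (YR j (fun g => Complex.normSq (f (q.1, q.2.1, g, q.2.2.2)) ^ k)) q.2.2.1
          = fderiv ℝ (fderiv ℝ (fun x => Complex.normSq (f x) ^ k)) q
              ((-2*((coords1 n₁ n₂ j q).re)) • ((0:ℝ), (0:ℝ), ((1:ℝ), (0:Fin n₁ → ℂ)), (0:Heis n₂))
                + ((0:ℝ), (0:ℝ), ((0:ℝ), Pi.single j Complex.I), (0:Heis n₂)))
              ((-2*((coords1 n₁ n₂ j q).re)) • ((0:ℝ), (0:ℝ), ((1:ℝ), (0:Fin n₁ → ℂ)), (0:Heis n₂))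
                + ((0:ℝ), (0:ℝ), ((0:ℝ), Pi.single j Complex.I), (0:Heis n₂))) := by
      intro j
      have h := xr_xr_eq' (fun x => Complex.normSq (f x) ^ k)
          (q.1, q.2.1, (0:Heis n₁), q.2.2.2) q.2.2.1 (iota1 n₁ n₂)
          (fun g => (q.1, q.2.1, g, q.2.2.2))
          (fun g => by simp [Prod.ext_iff]) hu2
          (phiY j) (Pi.single j Complex.I) (fun g => -2*(g.2 j).re) (fun g => rfl) (by simp)
      have hv : ((-2*((coords1 n₁ n₂ j q).re)) • ((0:ℝ), (0:ℝ), ((1:ℝ), (0:Fin n₁ → ℂ)), (0:Heis n₂))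
            + ((0:ℝ), (0:ℝ), ((0:ℝ), Pi.single j Complex.I), (0:Heis n₂)))
          = iota1 n₁ n₂ ((phiY j) q.2.2.1, Pi.single j Complex.I) := by
        simp [Prod.ext_iff]
      rw [hv]
      exact h
    have hEq : heatOpR₁ n₁ n₂ (fun x => Complex.normSq (f x) ^ k) q
        = (1/(4*(n₁:ℝ))) * ∑ j : Fin n₁,
            (fderiv ℝ (fderiv ℝ (fun x => Complex.normSq (f x) ^ k)) q
              ((2*((coords1 n₁ n₂ j q).im)) • ((0:ℝ), (0:ℝ), ((1:ℝ), (0:Fin n₁ → ℂ)), (0:Heis n₂))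
                + ((0:ℝ), (0:ℝ), ((0:ℝ), Pi.single j (1:ℂ)), (0:Heis n₂)))
              ((2*((coords1 n₁ n₂ j q).im)) • ((0:ℝ), (0:ℝ), ((1:ℝ), (0:Fin n₁ → ℂ)), (0:Heis n₂))
                + ((0:ℝ), (0:ℝ), ((0:ℝ), Pi.single j (1:ℂ)), (0:Heis n₂)))
            + fderiv ℝ (fderiv ℝ (fun x => Complex.normSq (f x) ^ k)) q
              ((-2*((coords1 n₁ n₂ j q).re)) • ((0:ℝ), (0:ℝ), ((1:ℝ), (0:Fin n₁ → ℂ)), (0:Heis n₂))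
                + ((0:ℝ), (0:ℝ), ((0:ℝ), Pi.single j Complex.I), (0:Heis n₂)))
              ((-2*((coords1 n₁ n₂ j q).re)) • ((0:ℝ), (0:ℝ), ((1:ℝ), (0:Fin n₁ → ℂ)), (0:Heis n₂))
                + ((0:ℝ), (0:ℝ), ((0:ℝ), Pi.single j Complex.I), (0:Heis n₂))))
          - fderiv ℝ (fun x => Complex.normSq (f x) ^ k) q
              ((1:ℝ), (0:ℝ), (0:Heis n₁), (0:Heis n₂)) := by
      unfold heatOpR₁
      rw [Finset.sum_congr rfl (fun j _ => by rw [htermX j, htermY j])]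
    rw [hEq]
    exact hcore
  · -- slot 2
    have hcore := slot_core f _ hU q hqU hf hfq0 k hk n₂ hn₂
        ((0:ℝ), (0:ℝ), (0:Heis n₁), ((1:ℝ), (0:Fin n₂ → ℂ)))
        ((0:ℝ), (1:ℝ), (0:Heis n₁), (0:Heis n₂))
        (fun j => ((0:ℝ), (0:ℝ), (0:Heis n₁), ((0:ℝ), Pi.single j (1:ℂ))))
        (fun j => ((0:ℝ), (0:ℝ), (0:Heis n₁), ((0:ℝ), Pi.single j Complex.I)))
        (coords2 n₁ n₂)
        (fun j => by simp)
        (fun j => by simp)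
        (fun j => by simp)
        (fun x hx => by
          have h := (hholo x hx.1 hx.2).2.1
          linear_combination 2*h)
        (fun x hx j => by
          have h := (hholo x hx.1 hx.2).2.2.2 j
          simp only [coords2_apply]
          linear_combination 2*h)
    have htermX : ∀ j : Fin n₂,
        XR j (XR j (fun g => Complex.normSq (f (q.1, q.2.1, q.2.2.1, g)) ^ k)) q.2.2.2
          = fderiv ℝ (fderiv ℝ (fun x => Complex.normSq (f x) ^ k)) q
              ((2*((coords2 n₁ n₂ j q).im)) • ((0:ℝ), (0:ℝ), (0:Heis n₁), ((1:ℝ), (0:Fin n₂ → ℂ)))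
                + ((0:ℝ), (0:ℝ), (0:Heis n₁), ((0:ℝ), Pi.single j (1:ℂ))))
              ((2*((coords2 n₁ n₂ j q).im)) • ((0:ℝ), (0:ℝ), (0:Heis n₁), ((1:ℝ), (0:Fin n₂ → ℂ)))
                + ((0:ℝ), (0:ℝ), (0:Heis n₁), ((0:ℝ), Pi.single j (1:ℂ)))) := by
      intro j
      have h := xr_xr_eq' (fun x => Complex.normSq (f x) ^ k)
          (q.1, q.2.1, q.2.2.1, (0:Heis n₂)) q.2.2.2 (iota2 n₁ n₂)
          (fun g => (q.1, q.2.1, q.2.2.1, g))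
          (fun g => by simp [Prod.ext_iff]) hu2
          (phiX j) (Pi.single j (1:ℂ)) (fun g => 2*(g.2 j).im) (fun g => rfl) (by simp)
      have hv : ((2*((coords2 n₁ n₂ j q).im)) • ((0:ℝ), (0:ℝ), (0:Heis n₁), ((1:ℝ), (0:Fin n₂ → ℂ)))
            + ((0:ℝ), (0:ℝ), (0:Heis n₁), ((0:ℝ), Pi.single j (1:ℂ))))
          = iota2 n₁ n₂ ((phiX j) q.2.2.2, Pi.single j (1:ℂ)) := by
        simp [Prod.ext_iff]
      rw [hv]
      exact h
    have htermY : ∀ j : Fin n₂,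
        YR j (YR j (fun g => Complex.normSq (f (q.1, q.2.1, q.2.2.1, g)) ^ k)) q.2.2.2
          = fderiv ℝ (fderiv ℝ (fun x => Complex.normSq (f x) ^ k)) q
              ((-2*((coords2 n₁ n₂ j q).re)) • ((0:ℝ), (0:ℝ), (0:Heis n₁), ((1:ℝ), (0:Fin n₂ → ℂ)))
                + ((0:ℝ), (0:ℝ), (0:Heis n₁), ((0:ℝ), Pi.single j Complex.I)))
              ((-2*((coords2 n₁ n₂ j q).re)) • ((0:ℝ), (0:ℝ), (0:Heis n₁), ((1:ℝ), (0:Fin n₂ → ℂ)))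
                + ((0:ℝ), (0:ℝ), (0:Heis n₁), ((0:ℝ), Pi.single j Complex.I))) := by
      intro j
      have h := xr_xr_eq' (fun x => Complex.normSq (f x) ^ k)
          (q.1, q.2.1, q.2.2.1, (0:Heis n₂)) q.2.2.2 (iota2 n₁ n₂)
          (fun g => (q.1, q.2.1, q.2.2.1, g))
          (fun g => by simp [Prod.ext_iff]) hu2
          (phiY j) (Pi.single j Complex.I) (fun g => -2*(g.2 j).re) (fun g => rfl) (by simp)
      have hv : ((-2*((coords2 n₁ n₂ j q).re)) • ((0:ℝ), (0:ℝ), (0:Heis n₁), ((1:ℝ), (0:Fin n₂ → ℂ)))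
            + ((0:ℝ), (0:ℝ), (0:Heis n₁), ((0:ℝ), Pi.single j Complex.I)))
          = iota2 n₁ n₂ ((phiY j) q.2.2.2, Pi.single j Complex.I) := by
        simp [Prod.ext_iff]
      rw [hv]
      exact h
    have hEq : heatOpR₂ n₁ n₂ (fun x => Complex.normSq (f x) ^ k) q
        = (1/(4*(n₂:ℝ))) * ∑ j : Fin n₂,
            (fderiv ℝ (fderiv ℝ (fun x => Complex.normSq (f x) ^ k)) q
              ((2*((coords2 n₁ n₂ j q).im)) • ((0:ℝ), (0:ℝ), (0:Heis n₁), ((1:ℝ), (0:Fin n₂ → ℂ)))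
                + ((0:ℝ), (0:ℝ), (0:Heis n₁), ((0:ℝ), Pi.single j (1:ℂ))))
              ((2*((coords2 n₁ n₂ j q).im)) • ((0:ℝ), (0:ℝ), (0:Heis n₁), ((1:ℝ), (0:Fin n₂ → ℂ)))
                + ((0:ℝ), (0:ℝ), (0:Heis n₁), ((0:ℝ), Pi.single j (1:ℂ))))
            + fderiv ℝ (fderiv ℝ (fun x => Complex.normSq (f x) ^ k)) q
              ((-2*((coords2 n₁ n₂ j q).re)) • ((0:ℝ), (0:ℝ), (0:Heis n₁), ((1:ℝ), (0:Fin n₂ → ℂ)))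
                + ((0:ℝ), (0:ℝ), (0:Heis n₁), ((0:ℝ), Pi.single j Complex.I)))
              ((-2*((coords2 n₁ n₂ j q).re)) • ((0:ℝ), (0:ℝ), (0:Heis n₁), ((1:ℝ), (0:Fin n₂ → ℂ)))
                + ((0:ℝ), (0:ℝ), (0:Heis n₁), ((0:ℝ), Pi.single j Complex.I))))
          - fderiv ℝ (fun x => Complex.normSq (f x) ^ k) q
              ((0:ℝ), (1:ℝ), (0:Heis n₁), (0:Heis n₂)) := by
      unfold heatOpR₂
      rw [Finset.sum_congr rfl (fun j _ => by rw [htermX j, htermY j])]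
    rw [hEq]
    exact hcore
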